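/- arXiv:1401.2638 — 8 statements merged into one kernel-verified Lean document; each statement's English description precedes it below -/
import Mathlib

section
/- Let a group G act as a convergence group on a compact metrizable space Z, and let Z' ⊆ Z be a nonempty infinite closed G-invariant subset. Then a point z ∈ Z' is a conical limit point for the action of G on Z if and only if z is a conical limit point for the action of G on Z'. -/
open Filter Topology Metric Pointwise

/-- The maps `z ↦ g n • z` converge to the constant map with value `b`, uniformly on
compact subsets of `Z` avoiding the point `a` (i.e. locally uniformly on `Z \ {a}`). -/
def ConvLocUnif {G Z : Type*} [Group G] [MetricSpace Z] [MulAction G Z]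
    (g : ℕ → G) (a b : Z) : Prop :=
  ∀ K : Set Z, IsCompact K → a ∉ K →
    TendstoUniformlyOn (fun n z => g n • z) (fun _ => b) atTop K

/-- The action of `G` on the compact metrizable space `Z` is a convergence action: it is an
action by homeomorphisms such that every injective sequence in `G` has a subsequence
converging locally uniformly, away from one point `a`, to a constant map with value `b`. -/
def IsConvergenceAction (G Z : Type*) [Group G] [MetricSpace Z] [MulAction G Z] : Prop :=
  (∀ g : G, Continuous fun z : Z => g • z) ∧
  ∀ g : ℕ → G, Function.Injective g →
    ∃ (a b : Z) (φ : ℕ → ℕ), StrictMono φ ∧ ConvLocUnif (fun k => g (φ k)) a b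

/-- `g` is a conical sequence for `z` with pole pair `(zm, zp)`. -/
def IsConicalSeq {G Z : Type*} [Group G] [MetricSpace Z] [MulAction G Z]
    (g : ℕ → G) (z zm zp : Z) : Prop :=
  Function.Injective g ∧ zm ≠ zp ∧
    Tendsto (fun n => g n • z) atTop (𝓝 zp) ∧ ConvLocUnif g z zm

/-- `z` is a conical limit point for the action of `G` on `Z`. -/
def IsConicalLimitPoint (G : Type*) {Z : Type*} [Group G] [MetricSpace Z] [MulAction G Z]
    (z : Z) : Prop :=
  ∃ (g : ℕ → G) (zm zp : Z), IsConicalSeq g z zm zp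

/-- `g` is a conical sequence for `z` with pole pair `(zm, zp)`, for the restricted
action of `G` on an invariant subset `Z' ⊆ Z`. -/
def IsConicalSeqOn {G Z : Type*} [Group G] [MetricSpace Z] [MulAction G Z]
    (Z' : Set Z) (g : ℕ → G) (z zm zp : Z) : Prop :=
  zm ∈ Z' ∧ zp ∈ Z' ∧ Function.Injective g ∧ zm ≠ zp ∧
    Tendsto (fun n => g n • z) atTop (𝓝 zp) ∧
    ∀ K : Set Z, IsCompact K → K ⊆ Z' → z ∉ K →
      TendstoUniformlyOn (fun n w => g n • w) (fun _ => zm) atTop K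

/-- `z` is a conical limit point for the restricted action of `G` on `Z' ⊆ Z`. -/
def IsConicalLimitPointOn (G : Type*) {Z : Type*} [Group G] [MetricSpace Z] [MulAction G Z]
    (Z' : Set Z) (z : Z) : Prop :=
  ∃ (g : ℕ → G) (zm zp : Z), IsConicalSeqOn Z' g z zm zp

/-- The action of `G` on `Z` is elementary: `G` is finite or there is a nonempty invariant
subset of cardinality at most 2. -/
def IsElementaryAction (G Z : Type*) [Group G] [MetricSpace Z] [MulAction G Z] : Prop :=
  Finite G ∨ ∃ S : Set Z, S.Nonempty ∧ S.encard ≤ 2 ∧ ∀ g : G, g • S = S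

/-- A Cannon–Thurston map: a continuous `G`-equivariant map from the boundary `B = ∂G` to `Z`. -/
def IsCannonThurston (G : Type*) {B Z : Type*} [Group G] [MetricSpace B] [MulAction G B]
    [MetricSpace Z] [MulAction G Z] (i : B → Z) : Prop :=
  Continuous i ∧ ∀ (g : G) (x : B), i (g • x) = g • i x

/-- `B` is (a realization of) the Gromov boundary of the word-hyperbolic group `G`:
the action of `G` on `B` is a convergence action in which every point is conical
(a uniform convergence action), which by Bowditch's theorem characterizes
word-hyperbolic groups acting on their Gromov boundary. -/
def IsHypBoundary (G B : Type*) [Group G] [MetricSpace B] [CompactSpace B]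
    [MulAction G B] : Prop :=
  IsConvergenceAction G B ∧ ∀ x : B, IsConicalLimitPoint G x

/-- `g` acts loxodromically on `Z` with repelling point `am` and attracting point `ap`. -/
def IsLoxodromicOn {G Z : Type*} [Group G] [MetricSpace Z] [MulAction G Z]
    (g : G) (am ap : Z) : Prop :=
  ¬ IsOfFinOrder g ∧ am ≠ ap ∧ {z : Z | g • z = z} = {am, ap} ∧
    (∀ K : Set Z, IsCompact K → am ∉ K →
      TendstoUniformlyOn (fun (n : ℕ) z => g ^ n • z) (fun _ => ap) atTop K) ∧
    (∀ K : Set Z, IsCompact K → ap ∉ K →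
      TendstoUniformlyOn (fun (n : ℕ) z => g⁻¹ ^ n • z) (fun _ => am) atTop K)

/-- `g` acts parabolically on `Z`: it has infinite order and exactly one fixed point. -/
def IsParabolicOn {G : Type*} (Z : Type*) [Group G] [MetricSpace Z] [MulAction G Z]
    (g : G) : Prop :=
  ¬ IsOfFinOrder g ∧ ∃ a : Z, {z : Z | g • z = z} = {a}

/-- `x ∈ ∂G` is asymptotic to the lamination `L_i`: for every conical sequence for `x`
with pole pair `(xm, xp)` one has `i xm = i xp`. -/
def AsymptoticTo (G : Type*) {B Z : Type*} [Group G] [MetricSpace B] [MulAction G B]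
    [MetricSpace Z] [MulAction G Z] (i : B → Z) (x : B) : Prop :=
  ∀ (g : ℕ → G) (xm xp : B), IsConicalSeq g x xm xp → i xm = i xp

/-- If `G` acts as a convergence group on a compact metrizable space `Z`
and `Z' ⊆ Z` is a nonempty infinite closed `G`-invariant subset, then a point `z ∈ Z'` is a
conical limit point for the action of `G` on `Z` iff it is a conical limit point for the
restricted action of `G` on `Z'`. -/
theorem stmt0 {G Z : Type*} [Group G] [MetricSpace Z] [CompactSpace Z] [MulAction G Z]
    (hconv : IsConvergenceAction G Z)
    (Z' : Set Z) (hne : Z'.Nonempty) (hinf : Z'.Infinite) (hcl : IsClosed Z')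
    (hinv : ∀ g : G, g • Z' = Z') (z : Z) (hz : z ∈ Z') :
    IsConicalLimitPoint G z ↔ IsConicalLimitPointOn G Z' z := by
  have hmem : ∀ (g : G) (w : Z), w ∈ Z' → g • w ∈ Z' := by
    intro g w hw
    have := hinv g
    rw [← this]
    exact Set.smul_mem_smul_set hw
  constructor
  · rintro ⟨g, zm, zp, hinj, hne', htend, hcu⟩
    -- zp ∈ Z'
    have hzp : zp ∈ Z' := hcl.mem_of_tendsto htend
      (Filter.Eventually.of_forall fun n => hmem _ _ hz)
    -- pick w ∈ Z', w ≠ z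
    obtain ⟨w, hwZ, hwz⟩ : ∃ w ∈ Z', w ≠ z := by
      obtain ⟨w, hw⟩ := (hinf.diff (Set.finite_singleton z)).nonempty
      exact ⟨w, hw.1, by simpa using hw.2⟩
    have hw_tend : Tendsto (fun n => g n • w) atTop (𝓝 zm) := by
      have := hcu {w} isCompact_singleton (by simpa using (Ne.symm hwz))
      simpa using this.tendsto_at (Set.mem_singleton w)
    have hzm : zm ∈ Z' := hcl.mem_of_tendsto hw_tend
      (Filter.Eventually.of_forall fun n => hmem _ _ hwZ)
    exact ⟨g, zm, zp, hzm, hzp, hinj, hne', htend,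
      fun K hKc _ hzK => hcu K hKc hzK⟩
  · rintro ⟨g, zm, zp, hzm, hzp, hinj, hne', htend, hK⟩
    obtain ⟨a, b, φ, hφ, hcu⟩ := hconv.2 g hinj
    set h : ℕ → G := fun k => g (φ k) with hh
    have hinj' : Function.Injective h := hinj.comp hφ.injective
    have htend' : Tendsto (fun n => h n • z) atTop (𝓝 zp) :=
      htend.comp hφ.tendsto_atTop
    -- the subsequence still satisfies the on-Z' convergence
    have hK' : ∀ K : Set Z, IsCompact K → K ⊆ Z' → z ∉ K →
        TendstoUniformlyOn (fun n w => h n • w) (fun _ => zm) atTop K := by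
      intro K hKc hKZ hzK
      intro u hu
      exact hφ.tendsto_atTop.eventually (hK K hKc hKZ hzK u hu)
    have haz : a = z := by
      by_contra haz
      have hzb : Tendsto (fun n => h n • z) atTop (𝓝 b) := by
        have := hcu {z} isCompact_singleton (by simpa using haz)
        simpa using this.tendsto_at (Set.mem_singleton z)
      have hbzp : b = zp := tendsto_nhds_unique hzb htend'
      obtain ⟨w, hwZ, hwa, hwz⟩ : ∃ w ∈ Z', w ≠ a ∧ w ≠ z := by
        obtain ⟨w, hw⟩ := (hinf.diff (Set.toFinite {a, z})).nonempty
        have := hw.2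
        simp only [Set.mem_insert_iff, Set.mem_singleton_iff, not_or] at this
        exact ⟨w, hw.1, this.1, this.2⟩
      have hwb : Tendsto (fun n => h n • w) atTop (𝓝 b) := by
        have := hcu {w} isCompact_singleton (by simpa using (Ne.symm hwa))
        simpa using this.tendsto_at (Set.mem_singleton w)
      have hwzm : Tendsto (fun n => h n • w) atTop (𝓝 zm) := by
        have := hK' {w} isCompact_singleton (by simpa using hwZ)
          (by simpa using (Ne.symm hwz))
        simpa using this.tendsto_at (Set.mem_singleton w)
      exact hne' (by rw [tendsto_nhds_unique hwzm hwb, hbzp])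
    have hbzm : b = zm := by
      obtain ⟨w, hwZ, hwz⟩ : ∃ w ∈ Z', w ≠ z := by
        obtain ⟨w, hw⟩ := (hinf.diff (Set.finite_singleton z)).nonempty
        exact ⟨w, hw.1, by simpa using hw.2⟩
      have hwb : Tendsto (fun n => h n • w) atTop (𝓝 b) := by
        have := hcu {w} isCompact_singleton (by rw [haz]; simpa using (Ne.symm hwz))
        simpa using this.tendsto_at (Set.mem_singleton w)
      have hwzm : Tendsto (fun n => h n • w) atTop (𝓝 zm) := by
        have := hK' {w} isCompact_singleton (by simpa using hwZ)
          (by simpa using (Ne.symm hwz))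
        simpa using this.tendsto_at (Set.mem_singleton w)
      exact tendsto_nhds_unique hwb hwzm
    refine ⟨h, zm, zp, hinj', hne', htend', ?_⟩
    intro K hKc hzK
    have := hcu K hKc (by rw [haz]; exact hzK)
    simpa [hbzm] using this
end

section
/- Let G be a word-hyperbolic group acting as a non-elementary convergence group on a compact metrizable space Z, and suppose g ∈ G is an accidental parabolic (an infinite-order element acting parabolically on Z). If i : ∂G → Z is a Cannon–Thurston map, then both fixed points of g in ∂G are sent by i to the unique fixed point of g in Z. -/
open Filter Topology Metric Pointwise

/-- If a word-hyperbolic group `G` (with Gromov boundary `B`) acts as a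
non-elementary convergence group on compact metrizable `Z`, `g ∈ G` is an accidental
parabolic (infinite order, acting parabolically on `Z` with unique fixed point `a`), and
`i : B → Z` is a Cannon–Thurston map, then both fixed points `xm, xp` of `g` in the boundary
`B` are sent by `i` to `a`. -/
theorem stmt2 {G B Z : Type*} [Group G] [MetricSpace B] [CompactSpace B] [MulAction G B]
    [MetricSpace Z] [CompactSpace Z] [MulAction G Z]
    (hB : IsHypBoundary G B)
    (hZ : IsConvergenceAction G Z) (hZne : ¬ IsElementaryAction G Z)
    (i : B → Z) (hi : IsCannonThurston G i)
    (g : G) (hg : ¬ IsOfFinOrder g) (a : Z) (hfix : {z : Z | g • z = z} = {a})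
    (xm xp : B) (hgB : IsLoxodromicOn g xm xp) :
    i xm = a ∧ i xp = a := by
  obtain ⟨-, -, hfixB, -, -⟩ := hgB
  have hxm : g • xm = xm := by
    have : xm ∈ {z : B | g • z = z} := by rw [hfixB]; left; rfl
    exact this
  have hxp : g • xp = xp := by
    have : xp ∈ {z : B | g • z = z} := by rw [hfixB]; right; rfl
    exact this
  constructor
  · have : i xm ∈ {z : Z | g • z = z} := by
      show g • i xm = i xm
      rw [← hi.2, hxm]
    rw [hfix] at this
    exact this
  · have : i xp ∈ {z : Z | g • z = z} := by
      show g • i xp = i xp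
      rw [← hi.2, hxp]
    rw [hfix] at this
    exact this
end

section
/- Suppose a word-hyperbolic group G acts on a compact metrizable space Z as a non-elementary convergence group, i : ∂G → Z is a Cannon–Thurston map, z ∈ Z is a conical limit point, and (g_n) is a conical sequence for z with pole pair (z_-, z_+). Then there exists x ∈ i^{-1}(z) and a subsequence (g_{n_k}) which is a conical sequence for x (for the action of G on ∂G) with some pole pair (x_-, x_+) satisfying i(x_-) = z_- and i(x_+) = z_+; in particular i(x_-) ≠ i(x_+). -/
open Filter Topology Metric Pointwise

private lemma convLocUnif_tendsto {G Z : Type*} [Group G] [MetricSpace Z] [MulAction G Z]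
    {g : ℕ → G} {a b : Z} (h : ConvLocUnif g a b) {w : Z} (hw : w ≠ a) :
    Tendsto (fun n => g n • w) atTop (𝓝 b) := by
  have h' := h {w} isCompact_singleton (by simpa using hw.symm)
  rwa [tendstoUniformlyOn_singleton_iff_tendsto] at h'

private lemma convLocUnif_comp {G Z : Type*} [Group G] [MetricSpace Z] [MulAction G Z]
    {g : ℕ → G} {a b : Z} (h : ConvLocUnif g a b) {ψ : ℕ → ℕ}
    (hψ : Tendsto ψ atTop atTop) : ConvLocUnif (fun k => g (ψ k)) a b :=
  fun K hK haK u hu => hψ.eventually (h K hK haK u hu)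

private lemma exists_three' {α : Type*} {s : Set α} (h : ¬ s.encard ≤ 2) :
    ∃ a ∈ s, ∃ b ∈ s, ∃ c ∈ s, a ≠ b ∧ a ≠ c ∧ b ≠ c := by
  have h1 : 1 < s.encard := by
    by_contra h1
    exact h ((not_lt.1 h1).trans (by norm_num))
  obtain ⟨a, b, ha, hb, hab⟩ := Set.one_lt_encard_iff.1 h1
  have hns : ¬ s ⊆ {a, b} := fun hsub =>
    h ((Set.encard_mono hsub).trans (Set.encard_pair hab).le)
  obtain ⟨c, hc, hc'⟩ := Set.not_subset.1 hns
  simp only [Set.mem_insert_iff, Set.mem_singleton_iff, not_or] at hc'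
  exact ⟨a, ha, b, hb, c, hc, hab, Ne.symm hc'.1, Ne.symm hc'.2⟩

private lemma pick_pair {α β : Type*} {i : α → β} {u v : α} {z0 : β}
    (huv : i u ≠ i v) (hu : i u ≠ z0) (hv : i v ≠ z0) (a0 : α) :
    ∃ w, w ≠ a0 ∧ i w ≠ z0 := by
  by_cases h : u = a0
  · exact ⟨v, fun hv' => huv (congrArg i (h.trans hv'.symm)), hv⟩
  · exact ⟨u, h, hu⟩

private lemma pick_one {α β : Type*} {i : α → β} {w1 w2 w3 : α}
    (h12 : i w1 ≠ i w2) (h13 : i w1 ≠ i w3) (h23 : i w2 ≠ i w3) (a0 : α) (z0 : β) :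
    ∃ w, w ≠ a0 ∧ i w ≠ z0 := by
  by_cases e1 : i w1 = z0
  · exact pick_pair h23 (fun h => h12 (e1.trans h.symm)) (fun h => h13 (e1.trans h.symm)) a0
  · by_cases e2 : i w2 = z0
    · exact pick_pair h13 e1 (fun h => h23 (e2.trans h.symm)) a0
    · exact pick_pair h12 e1 e2 a0

private lemma inv_tendsto {G Z : Type*} [Group G] [MetricSpace Z] [CompactSpace Z] [MulAction G Z]
    {g : ℕ → G} {z zm : Z} (hc : ConvLocUnif g z zm) {w : Z} (hw : w ≠ zm) :
    Tendsto (fun n => (g n)⁻¹ • w) atTop (𝓝 z) := by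
  rw [Metric.tendsto_nhds]
  intro ε hε
  set K : Set Z := (Metric.ball z ε)ᶜ with hK
  have hKc : IsCompact K := Metric.isOpen_ball.isClosed_compl.isCompact
  have hzK : z ∉ K := by simp [hK, hε]
  have hunif := Metric.tendstoUniformlyOn_iff.1 (hc K hKc hzK) (dist w zm) (dist_pos.2 hw)
  refine hunif.mono fun n hn => ?_
  by_contra hcon
  have hmem : (g n)⁻¹ • w ∈ K := by
    simp only [hK, Set.mem_compl_iff, Metric.mem_ball]
    exact hcon
  have := hn _ hmem
  rw [smul_inv_smul, dist_comm] at this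
  exact lt_irrefl _ this

/-- Conical sequences come from conical sequences on the boundary: if `z` is
conical for the action of `G` on `Z` with conical sequence `g` and pole pair `(zm, zp)`, then
there are `x ∈ i⁻¹(z)` and a subsequence of `g` which is a conical sequence for `x` in the
boundary `B`, with pole pair `(xm, xp)` satisfying `i xm = zm` and `i xp = zp`
(in particular `i xm ≠ i xp`). -/
theorem stmt5 {G B Z : Type*} [Group G] [MetricSpace B] [CompactSpace B] [MulAction G B]
    [MetricSpace Z] [CompactSpace Z] [MulAction G Z]
    (hB : IsHypBoundary G B)
    (hZ : IsConvergenceAction G Z) (hZne : ¬ IsElementaryAction G Z)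
    (i : B → Z) (hi : IsCannonThurston G i)
    (z : Z) (g : ℕ → G) (zm zp : Z) (hcon : IsConicalSeq g z zm zp) :
    ∃ (x : B) (φ : ℕ → ℕ) (xm xp : B), StrictMono φ ∧ i x = z ∧
      IsConicalSeq (fun k => g (φ k)) x xm xp ∧ i xm = zm ∧ i xp = zp ∧ i xm ≠ i xp := by
  obtain ⟨hginj, hzmzp, hgz, hgc⟩ := hcon
  -- apply the convergence action on B to the sequence g
  obtain ⟨a, b, φ, hφ, hab⟩ := hB.1.2 g hginj
  -- the range of i is a nonempty invariant set, so it has more than 2 points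
  have hrange : ¬ (Set.range i).encard ≤ 2 := by
    intro hle
    apply hZne
    refine Or.inr ⟨Set.range i, ⟨i a, ⟨a, rfl⟩⟩, hle, fun g0 => ?_⟩
    apply Set.Subset.antisymm
    · rintro _ ⟨_, ⟨x, rfl⟩, rfl⟩
      exact ⟨g0 • x, hi.2 g0 x⟩
    · rintro _ ⟨x, rfl⟩
      exact ⟨i (g0⁻¹ • x), ⟨g0⁻¹ • x, rfl⟩, by show g0 • i (g0⁻¹ • x) = i x; rw [← hi.2, smul_inv_smul]⟩
  obtain ⟨z1, hz1, z2, hz2, z3, hz3, e12, e13, e23⟩ := exists_three' hrange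
  obtain ⟨w1, rfl⟩ := hz1
  obtain ⟨w2, rfl⟩ := hz2
  obtain ⟨w3, rfl⟩ := hz3
  have d12 : w1 ≠ w2 := fun h => e12 (congrArg i h)
  have d13 : w1 ≠ w3 := fun h => e13 (congrArg i h)
  have d23 : w2 ≠ w3 := fun h => e23 (congrArg i h)
  -- i b = zm
  have hib : i b = zm := by
    obtain ⟨w, hwa, hwz⟩ := pick_one e12 e13 e23 a z
    have h1 : Tendsto (fun k => g (φ k) • w) atTop (𝓝 b) := convLocUnif_tendsto hab hwa
    have h2 : Tendsto (fun k => i (g (φ k) • w)) atTop (𝓝 (i b)) := (hi.1.tendsto b).comp h1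
    have h3 : Tendsto (fun k => g (φ k) • (i w)) atTop (𝓝 zm) :=
      (convLocUnif_tendsto hgc hwz).comp hφ.tendsto_atTop
    exact tendsto_nhds_unique (by simpa only [hi.2] using h2) h3
  -- apply the convergence action on B to the inverse sequence
  have hinvinj : Function.Injective (fun k => (g (φ k))⁻¹) :=
    fun x y hxy => hφ.injective (hginj (inv_injective hxy))
  obtain ⟨c, d, ψ, hψ, hcd⟩ := hB.1.2 _ hinvinj
  -- the repelling point of the inverse sequence is a
  have hda : d = a := by
    by_contra hne
    obtain ⟨u, hub, huc⟩ := pick_one (i := (id : B → B)) d12 d13 d23 b c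
    have hu_d : Tendsto (fun k => (g (φ (ψ k)))⁻¹ • u) atTop (𝓝 d) :=
      convLocUnif_tendsto hcd huc
    have hr0 : (0 : ℝ) < dist a d / 2 := half_pos (dist_pos.2 fun h => hne h.symm)
    have haK : a ∉ Metric.closedBall d (dist a d / 2) := by
      simp only [Metric.mem_closedBall, not_le]
      nlinarith [dist_pos.2 (fun h : a = d => hne h.symm)]
    have hunif := Metric.tendstoUniformlyOn_iff.1
      (convLocUnif_comp hab hψ.tendsto_atTop (Metric.closedBall d (dist a d / 2))
        Metric.isClosed_closedBall.isCompact haK) (dist b u) (dist_pos.2 (Ne.symm hub))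
    have hev : ∀ᶠ k in atTop, (g (φ (ψ k)))⁻¹ • u ∈ Metric.closedBall d (dist a d / 2) :=
      hu_d (Metric.closedBall_mem_nhds d hr0)
    obtain ⟨k, h1k, h2k⟩ := (hunif.and hev).exists
    have hlt := h1k _ h2k
    rw [smul_inv_smul] at hlt
    exact lt_irrefl _ hlt
  -- i a = z
  have hia : i a = z := by
    obtain ⟨w', hw'c, hw'zm⟩ := pick_one e12 e13 e23 c zm
    have t1 : Tendsto (fun k => (g (φ (ψ k)))⁻¹ • w') atTop (𝓝 a) :=
      hda ▸ convLocUnif_tendsto hcd hw'c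
    have t2 : Tendsto (fun k => i ((g (φ (ψ k)))⁻¹ • w')) atTop (𝓝 (i a)) :=
      (hi.1.tendsto a).comp t1
    have t3 : Tendsto (fun k => (g (φ (ψ k)))⁻¹ • (i w')) atTop (𝓝 z) :=
      (inv_tendsto hgc hw'zm).comp (hφ.comp hψ).tendsto_atTop
    exact tendsto_nhds_unique (by simpa only [hi.2] using t2) t3
  -- extract a convergent subsequence of g (φ (ψ k)) • a
  obtain ⟨xp, -, σ, hσ, hxp⟩ :=
    IsCompact.tendsto_subseq (x := fun k => g (φ (ψ k)) • a) isCompact_univ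
      (fun n => Set.mem_univ _)
  have hmono : StrictMono fun k => φ (ψ (σ k)) := hφ.comp (hψ.comp hσ)
  -- i xp = zp
  have hxpz : i xp = zp := by
    have u1 : Tendsto (fun j => i (g (φ (ψ (σ j))) • a)) atTop (𝓝 (i xp)) :=
      (hi.1.tendsto xp).comp hxp
    have u2 : Tendsto (fun j => g (φ (ψ (σ j))) • z) atTop (𝓝 zp) :=
      hgz.comp hmono.tendsto_atTop
    refine tendsto_nhds_unique ?_ u2
    simpa only [hi.2, hia] using u1
  refine ⟨a, fun k => φ (ψ (σ k)), b, xp, hmono, hia,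
    ⟨fun x y hxy => hmono.injective (hginj hxy), ?_, hxp,
      convLocUnif_comp hab (hψ.comp hσ).tendsto_atTop⟩, hib, hxpz, ?_⟩
  · intro h
    exact hzmzp (by rw [← hib, ← hxpz, h])
  · rw [hib, hxpz]
    exact hzmzp
end

section
/- Suppose a word-hyperbolic group G acts on a compact metrizable space Z as a non-elementary convergence group, i : ∂G → Z is a Cannon–Thurston map, and z ∈ i(∂G). Then z is not a conical limit point for the action of G on Z if and only if some x ∈ i^{-1}(z) is asymptotic to L_i. -/
open Filter Topology Metric Pointwise

section Aux

variable {G B Z : Type*} [Group G] [MetricSpace B] [MulAction G B]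
    [MetricSpace Z] [MulAction G Z]

/-- A `ConvLocUnif` limit passes to subsequences. -/
lemma ConvLocUnif.subseq {g : ℕ → G} {a b : Z} (h : ConvLocUnif g a b)
    {φ : ℕ → ℕ} (hφ : StrictMono φ) : ConvLocUnif (fun k => g (φ k)) a b := by
  intro K hK haK u hu
  exact hφ.tendsto_atTop.eventually (h K hK haK u hu)

/-- Pointwise convergence from `ConvLocUnif`. -/
lemma ConvLocUnif.tendsto_pt {g : ℕ → G} {a b : Z} (h : ConvLocUnif g a b)
    {w : Z} (hw : w ≠ a) : Tendsto (fun n => g n • w) atTop (𝓝 b) :=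
  (h {w} isCompact_singleton (by simpa using hw.symm)).tendsto_at rfl

/-- The range of an equivariant map is invariant. -/
lemma smul_range_eq (i : B → Z) (hi : ∀ (g : G) (x : B), i (g • x) = g • i x) (g : G) :
    g • Set.range i = Set.range i := by
  ext w
  simp only [Set.mem_smul_set, Set.mem_range]
  constructor
  · rintro ⟨_, ⟨x, rfl⟩, rfl⟩
    exact ⟨g • x, hi g x⟩
  · rintro ⟨x, rfl⟩
    exact ⟨i (g⁻¹ • x), ⟨_, rfl⟩, by rw [hi]; simp⟩

/-- If the action on `Z` is non-elementary and `i` is equivariant with nonempty domain,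
then the range of `i` contains a point different from any two given points. -/
lemma exists_ne_ne (hZne : ¬ IsElementaryAction G Z) (i : B → Z)
    (hi : ∀ (g : G) (x : B), i (g • x) = g • i x) (x0 : B) (u v : Z) :
    ∃ y : B, i y ≠ u ∧ i y ≠ v := by
  by_contra hcon
  push_neg at hcon
  apply hZne
  refine Or.inr ⟨Set.range i, ⟨i x0, Set.mem_range_self x0⟩, ?_, smul_range_eq i hi⟩
  have hsub : Set.range i ⊆ ({u, v} : Set Z) := by
    rintro _ ⟨y, rfl⟩
    rcases eq_or_ne (i y) u with h | h
    · exact Or.inl h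
    · exact Or.inr (hcon y h)
  calc (Set.range i).encard ≤ ({u, v} : Set Z).encard := Set.encard_le_encard hsub
    _ ≤ ({v} : Set Z).encard + 1 := Set.encard_insert_le {v} u
    _ = 2 := by rw [Set.encard_singleton]; rfl

end Aux

/-- (Theorem A(1)) For `z ∈ i(∂G)`, `z` is not a conical limit point for
the action of `G` on `Z` iff some `x ∈ i⁻¹(z)` is asymptotic to the lamination `L_i`. -/
theorem stmt6 {G B Z : Type*} [Group G] [MetricSpace B] [CompactSpace B] [MulAction G B]
    [MetricSpace Z] [CompactSpace Z] [MulAction G Z]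
    (hB : IsHypBoundary G B)
    (hZ : IsConvergenceAction G Z) (hZne : ¬ IsElementaryAction G Z)
    (i : B → Z) (hi : IsCannonThurston G i)
    (z : Z) (hz : z ∈ Set.range i) :
    ¬ IsConicalLimitPoint G z ↔ ∃ x : B, i x = z ∧ AsymptoticTo G i x := by
  obtain ⟨x0, hx0⟩ := hz
  have hicont : Continuous i := hi.1
  have hieq : ∀ (g : G) (x : B), i (g • x) = g • i x := hi.2
  constructor
  · -- If `z` is not conical, then `x0 ∈ i⁻¹(z)` is asymptotic to `L_i`.
    intro hnc
    refine ⟨x0, hx0, ?_⟩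
    intro g xm xp ⟨hginj, hne, hlim, hcl⟩
    by_contra hip
    obtain ⟨a, b, φ, hφ, hconv⟩ := hZ.2 g hginj
    -- `g n • z → i xp`
    have lim1 : Tendsto (fun n => g n • z) atTop (𝓝 (i xp)) := by
      have := (hicont.tendsto xp).comp hlim
      simpa only [Function.comp_def, hieq, hx0] using this
    -- pointwise limits on `B` pushed to `Z`
    have limB : ∀ y : B, y ≠ x0 → Tendsto (fun n => g n • i y) atTop (𝓝 (i xm)) := by
      intro y hy
      have h1 : Tendsto (fun n => g n • y) atTop (𝓝 xm) := hcl.tendsto_pt hy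
      have := (hicont.tendsto xm).comp h1
      simpa only [Function.comp_def, hieq] using this
    obtain ⟨y0, hy0a, hy0x⟩ := exists_ne_ne hZne i hieq x0 a (i x0)
    have hy0 : y0 ≠ x0 := fun h => hy0x (by rw [h])
    -- identify `b = i xm`
    have hb : b = i xm := by
      have h1 : Tendsto (fun k => g (φ k) • i y0) atTop (𝓝 b) := hconv.tendsto_pt hy0a
      have h2 : Tendsto (fun k => g (φ k) • i y0) atTop (𝓝 (i xm)) :=
        (limB y0 hy0).comp hφ.tendsto_atTop
      exact tendsto_nhds_unique h1 h2
    -- identify `a = z`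
    have ha : a = z := by
      by_contra ha
      have h1 : Tendsto (fun k => g (φ k) • z) atTop (𝓝 b) :=
        hconv.tendsto_pt (Ne.symm ha)
      have h2 : Tendsto (fun k => g (φ k) • z) atTop (𝓝 (i xp)) :=
        lim1.comp hφ.tendsto_atTop
      exact hip (hb ▸ tendsto_nhds_unique h1 h2)
    -- build a conical sequence for `z`, contradiction
    refine hnc ⟨fun k => g (φ k), i xm, i xp, ?_, hip, lim1.comp hφ.tendsto_atTop, ?_⟩
    · exact hginj.comp hφ.injective
    · rw [← ha, ← hb]; exact hconv
  · -- If some `x ∈ i⁻¹(z)` is asymptotic, then `z` is not conical.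
    rintro ⟨x, hx, hasym⟩ ⟨g, zm, zp, hginj, hzne, hlim, hcl⟩
    obtain ⟨a', b', φ, hφ, hconv⟩ := hB.1.2 g hginj
    -- extract a further subsequence so that `g (φ k) • x` converges in `B`
    obtain ⟨xp, -, ψ, hψ, hxp⟩ :=
      isCompact_univ.tendsto_subseq (x := fun k => g (φ k) • x) (fun k => Set.mem_univ _)
    set h : ℕ → G := fun n => g (φ (ψ n)) with hh
    have hinj : Function.Injective h := hginj.comp (hφ.injective.comp hψ.injective)
    have hmono : StrictMono (φ ∘ ψ) := hφ.comp hψ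
    have hconv' : ConvLocUnif h a' b' := hconv.subseq hψ
    have hhx : Tendsto (fun n => h n • x) atTop (𝓝 xp) := hxp
    -- `i xp = zp`
    have hzp : i xp = zp := by
      have h1 : Tendsto (fun n => h n • z) atTop (𝓝 (i xp)) := by
        have := (hicont.tendsto xp).comp hhx
        simpa only [Function.comp_def, hieq, hx] using this
      have h2 : Tendsto (fun n => h n • z) atTop (𝓝 zp) := hlim.comp hmono.tendsto_atTop
      exact tendsto_nhds_unique h1 h2
    -- a point whose image avoids `z` and `i a'`
    obtain ⟨y0, hy0z, hy0a⟩ := exists_ne_ne hZne i hieq x z (i a')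
    have hy0 : y0 ≠ a' := fun h => hy0a (by rw [h])
    -- `zm = i b'`
    have hzm : zm = i b' := by
      have h1 : Tendsto (fun n => h n • i y0) atTop (𝓝 (i b')) := by
        have h0 : Tendsto (fun n => h n • y0) atTop (𝓝 b') := hconv'.tendsto_pt hy0
        have := (hicont.tendsto b').comp h0
        simpa only [Function.comp_def, hieq] using this
      have h2 : Tendsto (fun n => h n • i y0) atTop (𝓝 zm) :=
        (hcl.tendsto_pt hy0z).comp hmono.tendsto_atTop
      exact tendsto_nhds_unique h2 h1
    -- derive `zm = zp`, contradicting `zm ≠ zp`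
    apply hzne
    rcases eq_or_ne a' x with rfl | hax
    · rcases eq_or_ne b' xp with rfl | hbx
      · rw [hzm, hzp]
      · have : i b' = i xp := hasym h b' xp ⟨hinj, hbx, hhx, hconv'⟩
        rw [hzm, this, hzp]
    · have h1 : Tendsto (fun n => h n • x) atTop (𝓝 b') :=
        hconv'.tendsto_pt (Ne.symm hax)
      have : xp = b' := tendsto_nhds_unique hhx h1
      rw [hzm, ← this, hzp]
end

section
/- Suppose a word-hyperbolic group G acts on a compact metrizable space Z as a non-elementary convergence group, i : ∂G → Z is a Cannon–Thurston map, and z ∈ i(∂G) with |i^{-1}(z)| > 1. Then every x ∈ i^{-1}(z) is asymptotic to L_i, and consequently z is not a conical limit point for the action of G on Z. -/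
open Filter Topology Metric Pointwise

/-- (Theorem A(2)) If `z ∈ i(∂G)` has more than one preimage under the
Cannon–Thurston map `i`, then every `x ∈ i⁻¹(z)` is asymptotic to `L_i`, and consequently
`z` is not a conical limit point for the action of `G` on `Z`. -/
theorem stmt7 {G B Z : Type*} [Group G] [MetricSpace B] [CompactSpace B] [MulAction G B]
    [MetricSpace Z] [CompactSpace Z] [MulAction G Z]
    (hB : IsHypBoundary G B)
    (hZ : IsConvergenceAction G Z) (hZne : ¬ IsElementaryAction G Z)
    (i : B → Z) (hi : IsCannonThurston G i)
    (z : Z) (hmult : 1 < (i ⁻¹' {z}).encard) :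
    (∀ x : B, i x = z → AsymptoticTo G i x) ∧ ¬ IsConicalLimitPoint G z := by
  obtain ⟨hiC, hiE⟩ := hi
  obtain ⟨x, y, hx, hy, hxy⟩ := Set.one_lt_encard_iff.mp hmult
  simp only [Set.mem_preimage, Set.mem_singleton_iff] at hx hy
  constructor
  · -- Part 1
    rintro x₀ hx₀ g xm xp ⟨hinj, hne, ht, hconv⟩
    obtain ⟨y', hy', hy'x⟩ := Set.exists_ne_of_one_lt_encard hmult x₀
    simp only [Set.mem_preimage, Set.mem_singleton_iff] at hy'
    have h1 : Tendsto (fun n => g n • y') atTop (𝓝 xm) :=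
      (hconv {y'} isCompact_singleton
        (by simpa using fun h => hy'x h.symm)).tendsto_at (Set.mem_singleton _)
    have h2 : Tendsto (fun n => i (g n • y')) atTop (𝓝 (i xm)) := (hiC.tendsto xm).comp h1
    have h3 : Tendsto (fun n => i (g n • x₀)) atTop (𝓝 (i xp)) := (hiC.tendsto xp).comp ht
    have e : ∀ n, i (g n • y') = i (g n • x₀) := fun n => by rw [hiE, hiE, hy', hx₀]
    exact tendsto_nhds_unique (h2.congr e) h3
  · -- Part 2
    rintro ⟨g, zm, zp, hinj, hne, htz, hconvZ⟩
    obtain ⟨a, b, φ, hφ, hconvB⟩ := hB.1.2 g hinj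
    have hex : ∃ p : B, i p = z ∧ p ≠ a := by
      by_cases hxa : x = a
      · exact ⟨y, hy, fun h => hxy (by rw [hxa, h])⟩
      · exact ⟨x, hx, hxa⟩
    obtain ⟨p, hp, hpa⟩ := hex
    have hb : i b = zp := by
      have h1 : Tendsto (fun k => g (φ k) • p) atTop (𝓝 b) :=
        (hconvB {p} isCompact_singleton
          (by simpa using fun h => hpa h.symm)).tendsto_at (Set.mem_singleton _)
      have h2 : Tendsto (fun k => i (g (φ k) • p)) atTop (𝓝 (i b)) := (hiC.tendsto b).comp h1
      have h3 : Tendsto (fun k => g (φ k) • z) atTop (𝓝 zp) := htz.comp hφ.tendsto_atTop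
      exact tendsto_nhds_unique (h2.congr fun k => by rw [hiE, hp]) h3
    have hw : ∃ w : B, w ≠ a ∧ i w ≠ z := by
      by_contra h
      push_neg at h
      apply hZne
      right
      refine ⟨Set.range i, ⟨z, ⟨p, hp⟩⟩, ?_, ?_⟩
      · have hsub : Set.range i ⊆ {i a, z} := by
          rintro _ ⟨w, rfl⟩
          by_cases hwa : w = a
          · exact Or.inl (by rw [hwa])
          · exact Or.inr (h w hwa)
        calc (Set.range i).encard ≤ ({i a, z} : Set Z).encard := Set.encard_mono hsub
          _ ≤ ({z} : Set Z).encard + 1 := Set.encard_insert_le _ _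
          _ = 2 := by rw [Set.encard_singleton, one_add_one_eq_two]
      · intro g'
        ext v
        simp only [Set.mem_smul_set, Set.mem_range]
        constructor
        · rintro ⟨_, ⟨u, rfl⟩, rfl⟩
          exact ⟨g' • u, hiE g' u⟩
        · rintro ⟨u, rfl⟩
          exact ⟨i (g'⁻¹ • u), ⟨g'⁻¹ • u, rfl⟩, by rw [← hiE, smul_inv_smul]⟩
    obtain ⟨w, hwa, hwz⟩ := hw
    have h1 : Tendsto (fun k => g (φ k) • w) atTop (𝓝 b) :=
      (hconvB {w} isCompact_singleton
        (by simpa using fun h => hwa h.symm)).tendsto_at (Set.mem_singleton _)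
    have h2 : Tendsto (fun k => g (φ k) • i w) atTop (𝓝 (i b)) :=
      ((hiC.tendsto b).comp h1).congr fun k => hiE _ _
    have h3 : Tendsto (fun n => g n • i w) atTop (𝓝 zm) :=
      (hconvZ {i w} isCompact_singleton
        (by simpa using fun h => hwz h.symm)).tendsto_at (Set.mem_singleton _)
    have h4 : Tendsto (fun k => g (φ k) • i w) atTop (𝓝 zm) := h3.comp hφ.tendsto_atTop
    exact hne (tendsto_nhds_unique h4 (hb ▸ h2))
end

section
/- Let G be a non-elementary word-hyperbolic group acting properly discontinuously by isometries on a proper geodesic Gromov-hyperbolic space Y without accidental parabolics, and suppose the Cannon–Thurston map i : ∂G → ∂Y exists. Then there exists a point z ∈ i(∂G) which is a non-conical limit point for the action of G on ∂Y if and only if i is not injective. -/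
open Filter Topology Metric Pointwise

/-- `σ` restricted to `[a,b]` is a geodesic (parametrized by arclength). -/
def IsGeodesicOn {X : Type*} [MetricSpace X] (σ : ℝ → X) (a b : ℝ) : Prop :=
  ∀ s ∈ Set.Icc a b, ∀ t ∈ Set.Icc a b, dist (σ s) (σ t) = |s - t|

/-- `X` is a geodesic metric space. -/
def IsGeodesicSpace (X : Type*) [MetricSpace X] : Prop :=
  ∀ a b : X, ∃ σ : ℝ → X, σ 0 = a ∧ σ (dist a b) = b ∧ IsGeodesicOn σ 0 (dist a b)

/-- `X` is `δ`-hyperbolic: geodesic triangles are `δ`-slim. -/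
def SlimTriangles (X : Type*) [MetricSpace X] (δ : ℝ) : Prop :=
  ∀ (L₁ L₂ L₃ : ℝ) (σ₁ σ₂ σ₃ : ℝ → X),
    IsGeodesicOn σ₁ 0 L₁ → IsGeodesicOn σ₂ 0 L₂ → IsGeodesicOn σ₃ 0 L₃ →
    σ₁ 0 = σ₃ 0 → σ₁ L₁ = σ₂ 0 → σ₂ L₂ = σ₃ L₃ →
    ∀ t ∈ Set.Icc (0:ℝ) L₃,
      Metric.infDist (σ₃ t) (σ₁ '' Set.Icc 0 L₁ ∪ σ₂ '' Set.Icc 0 L₂) ≤ δ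

/-- A geodesic ray, parametrized by `[0,∞)`. -/
def IsGeodesicRay {X : Type*} [MetricSpace X] (ρ : ℝ → X) : Prop :=
  ∀ s ∈ Set.Ici (0:ℝ), ∀ t ∈ Set.Ici (0:ℝ), dist (ρ s) (ρ t) = |s - t|

/-- A bi-infinite geodesic. -/
def IsGeodesicLine {X : Type*} [MetricSpace X] (γ : ℝ → X) : Prop :=
  ∀ s t : ℝ, dist (γ s) (γ t) = |s - t|

/-- A bi-infinite `r`-local geodesic. -/
def IsLocalGeodesic {X : Type*} [MetricSpace X] (r : ℝ) (γ : ℝ → X) : Prop :=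
  ∀ s t : ℝ, |s - t| ≤ r → dist (γ s) (γ t) = |s - t|

/-- An `r`-local geodesic on the interval `[a,b]`. -/
def IsLocalGeodesicOn {X : Type*} [MetricSpace X] (r : ℝ) (γ : ℝ → X) (a b : ℝ) : Prop :=
  ∀ s ∈ Set.Icc a b, ∀ t ∈ Set.Icc a b, |s - t| ≤ r → dist (γ s) (γ t) = |s - t|


/-- The restricted action of `G` on an invariant subset `Z' ⊆ Z` is a convergence action. -/
def IsConvergenceActionOn (G : Type*) {Z : Type*} [Group G] [MetricSpace Z] [MulAction G Z]
    (Z' : Set Z) : Prop :=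
  (∀ g : G, Continuous fun z : Z => g • z) ∧ (∀ g : G, g • Z' = Z') ∧
  ∀ g : ℕ → G, Function.Injective g →
    ∃ a ∈ Z', ∃ b ∈ Z', ∃ φ : ℕ → ℕ, StrictMono φ ∧
      ∀ K : Set Z, IsCompact K → K ⊆ Z' → a ∉ K →
        TendstoUniformlyOn (fun k w => g (φ k) • w) (fun _ => b) atTop K

/-- The restricted action of `G` on `Z' ⊆ Z` is elementary. -/
def IsElementaryActionOn (G : Type*) {Z : Type*} [Group G] [MetricSpace Z] [MulAction G Z]
    (Z' : Set Z) : Prop :=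
  Finite G ∨ ∃ S : Set Z, S ⊆ Z' ∧ S.Nonempty ∧ S.encard ≤ 2 ∧ ∀ g : G, g • S = S


private lemma smulRangeEq {G B Z : Type*} [Group G] [MulAction G B] [MulAction G Z]
    (i : B → Z) (heq : ∀ (g : G) (x : B), i (g • x) = g • i x) (g : G) :
    g • Set.range i = Set.range i := by
  ext w
  simp only [Set.mem_smul_set, Set.mem_range]
  constructor
  · rintro ⟨-, ⟨x, rfl⟩, rfl⟩
    exact ⟨g • x, heq g x⟩
  · rintro ⟨x, rfl⟩
    exact ⟨i (g⁻¹ • x), ⟨g⁻¹ • x, rfl⟩, by rw [← heq, smul_inv_smul]⟩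

private lemma existsPairNe {B : Type*} (hU : ¬ (Set.univ : Set B).encard ≤ 2) (x : B) :
    ∃ u v : B, u ≠ x ∧ v ≠ x ∧ u ≠ v := by
  by_contra h
  push_neg at h
  apply hU
  by_cases hu : ∃ u : B, u ≠ x
  · obtain ⟨u, hux⟩ := hu
    refine le_trans (Set.encard_mono fun v _ => ?_) (Set.encard_pair (Ne.symm hux)).le
    rcases eq_or_ne v x with rfl | hvx
    · exact Or.inl rfl
    · exact Or.inr (h v u hvx hux)
  · push_neg at hu
    refine le_trans (Set.encard_mono fun v _ => Set.mem_singleton_iff.mpr (hu v)) ?_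
    rw [Set.encard_singleton]
    exact one_le_two

private lemma smulUnivEq {G B : Type*} [Group G] [MulAction G B] (g : G) :
    g • (Set.univ : Set B) = Set.univ := by
  ext w
  simp only [Set.mem_smul_set, Set.mem_univ, iff_true]
  exact ⟨g⁻¹ • w, trivial, smul_inv_smul g w⟩

/-- Let the non-elementary word-hyperbolic group `G` (with Gromov boundary
`B`) act properly discontinuously by isometries on a proper geodesic Gromov-hyperbolic space
`Y` without accidental parabolics, and suppose the Cannon–Thurston map `i : ∂G → ∂Y` exists,
where `∂Y = Ybar \ ιY(Y)` is the boundary of the hyperbolic compactification `Ybar` and the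
induced action of `G` on `∂Y` is a non-elementary convergence action.  Then there exists a
point `z ∈ i(∂G)` which is non-conical for the action of `G` on `∂Y` iff `i` is not
injective. -/
theorem stmt10 {G B Y Ybar : Type*} [Group G]
    [MetricSpace B] [CompactSpace B] [MulAction G B]
    [MetricSpace Y] [ProperSpace Y] [MulAction G Y]
    [MetricSpace Ybar] [CompactSpace Ybar] [MulAction G Ybar]
    -- `G` is a non-elementary word-hyperbolic group with Gromov boundary `B`
    (hB : IsHypBoundary G B) (hGne : ¬ IsElementaryAction G B)
    -- `Y` is a proper geodesic Gromov-hyperbolic space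
    (hgeo : IsGeodesicSpace Y) (δY : ℝ) (hδY : 0 ≤ δY) (hslim : SlimTriangles Y δY)
    -- the action of `G` on `Y` is properly discontinuous and isometric
    [ProperlyDiscontinuousSMul G Y] (hisom : ∀ g : G, Isometry fun y : Y => g • y)
    -- the hyperbolic compactification `Ybar = Y ∪ ∂Y`
    (ιY : Y → Ybar) (hYemb : IsEmbedding ιY) (hYdense : Dense (Set.range ιY))
    (hYeq : ∀ (g : G) (y : Y), ιY (g • y) = g • ιY y)
    (hYcont : ∀ g : G, Continuous fun w : Ybar => g • w)
    -- the induced action of `G` on `∂Y` is a non-elementary convergence action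
    (hconv : IsConvergenceActionOn G ((Set.range ιY)ᶜ))
    (hnel : ¬ IsElementaryActionOn G ((Set.range ιY)ᶜ))
    -- without accidental parabolics: no infinite-order element acts parabolically on `∂Y`
    (hnoap : ∀ g : G, ¬ IsOfFinOrder g →
      ¬ ∃ a : Ybar, {w : Ybar | w ∈ (Set.range ιY)ᶜ ∧ g • w = w} = {a})
    -- the Cannon–Thurston map `i : ∂G → ∂Y` exists
    (i : B → Ybar) (hi : IsCannonThurston G i) (hiR : Set.range i ⊆ (Set.range ιY)ᶜ) :
    (∃ z ∈ Set.range i, ¬ IsConicalLimitPointOn G ((Set.range ιY)ᶜ) z) ↔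
      ¬ Function.Injective i := by
  -- `B` has at least three points whenever it is nonempty
  have hU : ∀ _x : B, ¬ (Set.univ : Set B).encard ≤ 2 := by
    intro x hle
    exact hGne (Or.inr ⟨Set.univ, ⟨x, trivial⟩, hle, fun g => smulUnivEq g⟩)
  constructor
  · -- a non-conical point in the image forces non-injectivity
    rintro ⟨z, hz, hzc⟩ hinj
    apply hzc
    obtain ⟨x, rfl⟩ := hz
    obtain ⟨g, xm, xp, hginj, hxmp, hto, hcu⟩ := hB.2 x
    have htoZ : Tendsto (fun n => g n • i x) atTop (𝓝 (i xp)) := by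
      have := (hi.1.tendsto xp).comp hto
      simp only [Function.comp_def, hi.2] at this
      exact this
    refine ⟨g, i xm, i xp, hiR ⟨xm, rfl⟩, hiR ⟨xp, rfl⟩, hginj,
      fun h => hxmp (hinj h), htoZ, ?_⟩
    intro K hK hKsub hzK
    by_contra hbad
    rw [Metric.tendstoUniformlyOn_iff] at hbad
    push_neg at hbad
    obtain ⟨ε, hε, hfreq⟩ := hbad
    have hfreq : ∃ᶠ n in atTop, ¬ ∀ y ∈ K, dist (i xm) (g n • y) < ε :=
      hfreq.mono fun n ⟨y, hy, hle⟩ h => absurd (h y hy) (not_lt.mpr hle)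
    obtain ⟨ns, hns, hbadn⟩ := Filter.extraction_of_frequently_atTop hfreq
    obtain ⟨a, ha, b, hb, φ, hφ, huc⟩ := hconv.2.2 (fun k => g (ns k))
      (hginj.comp hns.injective)
    -- pick a point of `B` other than `x` whose image is not `a`
    obtain ⟨u, v, hux, hvx, huv⟩ := existsPairNe (hU x) x
    have : ∃ w : B, w ≠ x ∧ i w ≠ a := by
      rcases eq_or_ne (i u) a with h1 | h1
      · exact ⟨v, hvx, fun h2 => huv (hinj (h1.trans h2.symm))⟩
      · exact ⟨u, hux, h1⟩
    obtain ⟨w, hwx, hwa⟩ := this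
    -- pointwise convergence of the subsequence at `i w` identifies `b = i xm`
    have hptB : Tendsto (fun n => g n • i w) atTop (𝓝 (i xm)) := by
      have h1 : Tendsto (fun n => g n • w) atTop (𝓝 xm) :=
        (hcu {w} isCompact_singleton (fun h => hwx (Set.mem_singleton_iff.mp h).symm)).tendsto_at
          rfl
      have := (hi.1.tendsto xm).comp h1
      simp only [Function.comp_def, hi.2] at this
      exact this
    have hsub : Tendsto (fun k => g (ns (φ k)) • i w) atTop (𝓝 (i xm)) :=
      hptB.comp ((hns.comp hφ).tendsto_atTop)
    have hbw : Tendsto (fun k => g (ns (φ k)) • i w) atTop (𝓝 b) :=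
      (huc {i w} isCompact_singleton
        (Set.singleton_subset_iff.mpr (hiR ⟨w, rfl⟩))
        (fun h => hwa (Set.mem_singleton_iff.mp h).symm)).tendsto_at rfl
    have hbeq : b = i xm := tendsto_nhds_unique hbw hsub
    -- `a` must be `i x`
    have haeq : a = i x := by
      by_contra hax
      have h1 : Tendsto (fun k => g (ns (φ k)) • i x) atTop (𝓝 b) :=
        (huc {i x} isCompact_singleton
          (Set.singleton_subset_iff.mpr (hiR ⟨x, rfl⟩))
          (fun h => hax (Set.mem_singleton_iff.mp h))).tendsto_at rfl
      have h2 : Tendsto (fun k => g (ns (φ k)) • i x) atTop (𝓝 (i xp)) :=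
        htoZ.comp ((hns.comp hφ).tendsto_atTop)
      exact hxmp (hinj ((hbeq ▸ tendsto_nhds_unique h1 h2 : i xm = i xp)))
    -- uniform convergence on `K` contradicts the bad indices
    have huK := huc K hK hKsub (haeq ▸ hzK)
    rw [Metric.tendstoUniformlyOn_iff] at huK
    obtain ⟨k, hk⟩ := (huK ε hε).exists
    rw [hbeq] at hk
    exact hbadn (φ k) hk
  · -- non-injectivity gives a non-conical point
    intro hni
    rw [Function.not_injective_iff] at hni
    obtain ⟨x, y, hixy, hxy⟩ := hni
    refine ⟨i x, ⟨x, rfl⟩, ?_⟩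
    rintro ⟨g, zm, zp, hzm, hzp, hginj, hzmp, hto, hcu⟩
    obtain ⟨a, b, φ, hφ, hcuB⟩ := hB.1.2 g hginj
    -- choose `v ∈ {x, y}` with `v ≠ a`
    have : ∃ v : B, v ≠ a ∧ i v = i x := by
      rcases eq_or_ne x a with rfl | hx
      · exact ⟨y, fun h => hxy h.symm, hixy.symm⟩
      · exact ⟨x, hx, rfl⟩
    obtain ⟨v, hva, hvix⟩ := this
    -- choose `u ≠ a` with `i u ≠ i x`
    have : ∃ u : B, u ≠ a ∧ i u ≠ i x := by
      by_contra h
      push_neg at h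
      refine hnel (Or.inr ⟨Set.range i, hiR, ⟨i x, x, rfl⟩, ?_,
        fun g => smulRangeEq i hi.2 g⟩)
      have hsub : Set.range i ⊆ {i x, i a} := by
        rintro - ⟨w, rfl⟩
        rcases eq_or_ne w a with rfl | hw
        · exact Or.inr rfl
        · exact Or.inl (h w hw)
      rcases eq_or_ne (i x) (i a) with he | he
      · refine le_trans (Set.encard_mono (he ▸ hsub)) ?_
        simp only [Set.insert_eq_self.mpr (Set.mem_singleton _), Set.encard_singleton]
        exact one_le_two
      · exact le_trans (Set.encard_mono hsub) (Set.encard_pair he).le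
    obtain ⟨u, hua, huix⟩ := this
    -- `i b = zp` via `v`
    have hv1 : Tendsto (fun k => g (φ k) • v) atTop (𝓝 b) :=
      (hcuB {v} isCompact_singleton
        (fun h => hva (Set.mem_singleton_iff.mp h).symm)).tendsto_at rfl
    have hv2 : Tendsto (fun k => g (φ k) • i x) atTop (𝓝 (i b)) := by
      have := (hi.1.tendsto b).comp hv1
      simp only [Function.comp_def, hi.2, hvix] at this
      exact this
    have hv3 : Tendsto (fun k => g (φ k) • i x) atTop (𝓝 zp) :=
      hto.comp hφ.tendsto_atTop
    have hib : i b = zp := tendsto_nhds_unique hv2 hv3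
    -- `i b = zm` via `u`
    have hu1 : Tendsto (fun k => g (φ k) • u) atTop (𝓝 b) :=
      (hcuB {u} isCompact_singleton
        (fun h => hua (Set.mem_singleton_iff.mp h).symm)).tendsto_at rfl
    have hu2 : Tendsto (fun k => g (φ k) • i u) atTop (𝓝 (i b)) := by
      have := (hi.1.tendsto b).comp hu1
      simp only [Function.comp_def, hi.2] at this
      exact this
    have hu3 : Tendsto (fun k => g (φ k) • i u) atTop (𝓝 zm) := by
      have h1 : Tendsto (fun n => g n • i u) atTop (𝓝 zm) :=
        (hcu {i u} isCompact_singleton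
          (Set.singleton_subset_iff.mpr (hiR ⟨u, rfl⟩))
          (fun h => huix (Set.mem_singleton_iff.mp h).symm)).tendsto_at rfl
      exact h1.comp hφ.tendsto_atTop
    exact hzmp ((tendsto_nhds_unique hu2 hu3).symm.trans hib)
end

section
/- Suppose G is a word-hyperbolic group acting on a compact metrizable space Z as a non-elementary convergence group, i : ∂G → Z is a Cannon–Thurston map, and x ∈ ∂G is a controlled concentration point with |i^{-1}(i(x))| = 1. Then i(x) is a conical limit point for the action of G on Z. -/
open Filter Topology Metric Pointwise

/-- `x` is a controlled concentration point for the action of `G` on its boundary `B`. -/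
def IsControlledConcentrationPoint (G : Type*) {B : Type*} [Group G] [MetricSpace B]
    [MulAction G B] (x : B) : Prop :=
  ∃ (g : ℕ → G) (y : B), Function.Injective g ∧ y ≠ x ∧
    Tendsto (fun n => g n • x) atTop (𝓝 x) ∧ ConvLocUnif g x y

/-- If a word-hyperbolic group `G` (with Gromov boundary `B`) acts on
compact metrizable `Z` as a non-elementary convergence group with Cannon–Thurston map `i`,
and `x ∈ B` is a controlled concentration point with `|i⁻¹(i x)| = 1`, then `i x` is a
conical limit point for the action of `G` on `Z`. -/
theorem stmt15 {G B Z : Type*} [Group G] [MetricSpace B] [CompactSpace B] [MulAction G B]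
    [MetricSpace Z] [CompactSpace Z] [MulAction G Z]
    (hB : IsHypBoundary G B)
    (hZ : IsConvergenceAction G Z) (hZne : ¬ IsElementaryAction G Z)
    (i : B → Z) (hi : IsCannonThurston G i)
    (x : B) (hccp : IsControlledConcentrationPoint G x)
    (huniq : ∀ x' : B, i x' = i x → x' = x) :
    IsConicalLimitPoint G (i x) := by
  obtain ⟨g, y, hginj, hyx, hgx, hgloc⟩ := hccp
  obtain ⟨a, b, φ, hφ, hconv2⟩ := hZ.2 g hginj
  set g' : ℕ → G := fun k => g (φ k) with hg'def
  have hg'inj : Function.Injective g' := hginj.comp hφ.injective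
  have hiy : i y ≠ i x := fun h => hyx (huniq y h)
  -- g' k • i x → i x
  have hxlim : Tendsto (fun k => g' k • i x) atTop (𝓝 (i x)) := by
    have h1 : Tendsto (fun n => i (g n • x)) atTop (𝓝 (i x)) :=
      (hi.1.tendsto x).comp hgx
    have h2 := h1.comp hφ.tendsto_atTop
    have h3 : Tendsto (fun k => i (g (φ k) • x)) atTop (𝓝 (i x)) := h2
    have heq : (fun k => i (g (φ k) • x)) = fun k => g' k • i x := by
      funext k; rw [hi.2]
    exact heq ▸ h3
  -- for any v ≠ x : g' k • i v → i y
  have key : ∀ v : B, v ≠ x → Tendsto (fun k => g' k • i v) atTop (𝓝 (i y)) := by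
    intro v hv
    have h0 : Tendsto (fun n => g n • v) atTop (𝓝 y) := by
      have := (hgloc {v} isCompact_singleton (by simpa using hv.symm)).tendsto_at
        (Set.mem_singleton v)
      simpa using this
    have h1 : Tendsto (fun n => i (g n • v)) atTop (𝓝 (i y)) := (hi.1.tendsto y).comp h0
    have h2 := h1.comp hφ.tendsto_atTop
    have h3 : Tendsto (fun k => i (g (φ k) • v)) atTop (𝓝 (i y)) := h2
    have heq : (fun k => i (g (φ k) • v)) = fun k => g' k • i v := by
      funext k; rw [hi.2]
    exact heq ▸ h3
  -- for any z ≠ a : g' k • z → b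
  have keyZ : ∀ z : Z, z ≠ a → Tendsto (fun k => g' k • z) atTop (𝓝 b) := by
    intro z hz
    have := (hconv2 {z} isCompact_singleton (by simpa using hz.symm)).tendsto_at
      (Set.mem_singleton z)
    simpa using this
  by_cases ha : a = i x
  · -- main case: pole is i x; need b = i y
    obtain ⟨g0, zm0, zp0, _, hne0, _, _⟩ := hB.2 x
    have hw : ∃ w : B, w ≠ x := by
      rcases eq_or_ne zm0 x with h | h
      · exact ⟨zp0, fun hc => hne0 (h.trans hc.symm)⟩
      · exact ⟨zm0, h⟩
    obtain ⟨w, hwx⟩ := hw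
    have hiw : i w ≠ a := by rw [ha]; exact fun h => hwx (huniq w h)
    have hb : b = i y := tendsto_nhds_unique (keyZ (i w) hiw) (key w hwx)
    refine ⟨g', i y, i x, hg'inj, hiy, hxlim, ?_⟩
    rw [← ha, ← hb]
    exact hconv2
  · -- impossible case
    exfalso
    have hb : b = i x := tendsto_nhds_unique (keyZ (i x) (Ne.symm ha)) hxlim
    by_cases hex : ∃ v : B, v ≠ x ∧ i v ≠ a
    · obtain ⟨v, hv, hiv⟩ := hex
      have : b = i y := tendsto_nhds_unique (keyZ (i v) hiv) (key v hv)
      exact hiy (this.symm.trans hb)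
    · push_neg at hex
      apply hZne
      right
      refine ⟨Set.range i, ⟨i x, x, rfl⟩, ?_, ?_⟩
      · have hsub : Set.range i ⊆ {i x, a} := by
          rintro _ ⟨v, rfl⟩
          rcases eq_or_ne v x with rfl | hv
          · exact Or.inl rfl
          · exact Or.inr (hex v hv)
        calc (Set.range i).encard ≤ ({i x, a} : Set Z).encard := Set.encard_le_encard hsub
          _ ≤ 2 := by
            refine (Set.encard_insert_le _ _).trans ?_
            rw [Set.encard_singleton]
            norm_num
      · intro gg
        ext z
        simp only [Set.mem_smul_set, Set.mem_range]
        constructor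
        · rintro ⟨_, ⟨v, rfl⟩, rfl⟩
          exact ⟨gg • v, hi.2 gg v⟩
        · rintro ⟨v, rfl⟩
          exact ⟨i (gg⁻¹ • v), ⟨_, rfl⟩, by rw [hi.2, smul_inv_smul]⟩
end

section
/- Let G be a word-hyperbolic group acting as a non-elementary convergence group on a compact metrizable space Z. Then a G-limit point z ∈ Z is a conical limit point if and only if for every point s ∈ Z with s ≠ z there exist an infinite sequence (g_n) of distinct elements of G and points s_∞, z_∞ ∈ Z with s_∞ ≠ z_∞ such that g_n z → z_∞ and g_n s → s_∞. -/
open Filter Topology Metric Pointwise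

/-- Let the word-hyperbolic group `G` (with Gromov boundary `B`) act as a
non-elementary convergence group on compact metrizable `Z`, and let `z` be a point of the
limit set `Λ` (the unique minimal nonempty closed `G`-invariant subset of `Z`). Then `z` is
a conical limit point iff for every `s ≠ z` there exist a sequence of distinct elements
`g n ∈ G` and points `s∞ ≠ z∞` with `g n • z → z∞` and `g n • s → s∞`. -/
theorem stmt16 {G B Z : Type*} [Group G] [MetricSpace B] [CompactSpace B] [MulAction G B]
    [MetricSpace Z] [CompactSpace Z] [MulAction G Z]
    (hB : IsHypBoundary G B)
    (hZ : IsConvergenceAction G Z) (hne : ¬ IsElementaryAction G Z)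
    (Λ : Set Z) (hΛne : Λ.Nonempty) (hΛcl : IsClosed Λ) (hΛinv : ∀ g : G, g • Λ = Λ)
    (hΛmin : ∀ C : Set Z, C.Nonempty → IsClosed C → (∀ g : G, g • C = C) → Λ ⊆ C)
    (z : Z) (hz : z ∈ Λ) :
    IsConicalLimitPoint G z ↔
      ∀ s : Z, s ≠ z → ∃ (g : ℕ → G) (sinf zinf : Z), Function.Injective g ∧ sinf ≠ zinf ∧
        Tendsto (fun n => g n • z) atTop (𝓝 zinf) ∧
        Tendsto (fun n => g n • s) atTop (𝓝 sinf) := by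
  constructor
  · rintro ⟨g, zm, zp, hginj, hmp, hgz, hglu⟩ s hs
    refine ⟨g, zm, zp, hginj, hmp, hgz, ?_⟩
    exact (hglu {s} isCompact_singleton (by simpa using Ne.symm hs)).tendsto_at rfl
  · intro H
    have hγ : ∃ γ : G, γ • z ≠ z := by
      by_contra h
      push_neg at h
      refine hne (Or.inr ⟨{z}, ⟨z, rfl⟩, by simp, fun g => ?_⟩)
      rw [Set.smul_set_singleton, h g]
    obtain ⟨γ, hγz⟩ := hγ
    obtain ⟨g, sinf, zinf, hinj, hsz, hz', hs'⟩ := H (γ • z) hγz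
    obtain ⟨a, b, φ, hφ, hconv⟩ := hZ.2 g hinj
    have hg'inj : Function.Injective (fun k => g (φ k)) := hinj.comp hφ.injective
    have hz'' : Tendsto (fun k => g (φ k) • z) atTop (𝓝 zinf) := hz'.comp hφ.tendsto_atTop
    have hs'' : Tendsto (fun k => g (φ k) • (γ • z)) atTop (𝓝 sinf) :=
      hs'.comp hφ.tendsto_atTop
    have hpt : ∀ w : Z, w ≠ a → Tendsto (fun k => g (φ k) • w) atTop (𝓝 b) := fun w hw =>
      (hconv {w} isCompact_singleton (by simpa using Ne.symm hw)).tendsto_at rfl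
    by_cases hza : z = a
    · subst hza
      have hsb : sinf = b := tendsto_nhds_unique hs'' (hpt _ hγz)
      exact ⟨fun k => g (φ k), b, zinf, hg'inj, hsb ▸ hsz, hz'', hconv⟩
    · by_cases hsa : γ • z = a
      · -- the pole is `s = γ • z`; translate the conical sequence by `γ`
        have hzb : zinf = b := tendsto_nhds_unique hz'' (hpt z hza)
        refine ⟨fun k => g (φ k) * γ, b, sinf, ?_, (hzb ▸ hsz).symm, ?_, ?_⟩
        · exact fun j k h => hg'inj (mul_right_cancel h)
        · simpa [mul_smul] using hs''
        · intro K hK hzK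
          have hKc : IsCompact ((fun w => γ • w) '' K) := hK.image (hZ.1 γ)
          have haK : a ∉ (fun w => γ • w) '' K := by
            rintro ⟨w, hwK, hwa⟩
            rw [← hsa] at hwa
            exact hzK (MulAction.injective γ hwa ▸ hwK)
          have := hconv _ hKc haK
          rw [Metric.tendstoUniformlyOn_iff] at this ⊢
          intro ε hε
          filter_upwards [this ε hε] with n hn w hw
          simpa [mul_smul] using hn (γ • w) ⟨w, hw, rfl⟩
      · exact absurd ((tendsto_nhds_unique hs'' (hpt _ hsa)).trans
          (tendsto_nhds_unique hz'' (hpt z hza)).symm) hsz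
end
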